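/- Let w, h be real numbers and let f(θ) = (w − sin θ)·(h − cos θ). For every θ in the open interval (−π/2, π/2), if the derivative of f at θ is 0, then x = tan θ satisfies the quartic equation (w² − 1)·x⁴ − 2·w·h·x³ + (w² + h² + 2)·x² − 2·w·h·x + (h² − 1) = 0. -/

import Mathlib

open Real

theorem stmt_4 (w h : ℝ) (θ : ℝ) (hθ : θ ∈ Set.Ioo (-(Real.pi / 2)) (Real.pi / 2))
    (hcrit : deriv (fun θ : ℝ => (w - Real.sin θ) * (h - Real.cos θ)) θ = 0) :
    (w ^ 2 - 1) * Real.tan θ ^ 4 - 2 * w * h * Real.tan θ ^ 3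
      + (w ^ 2 + h ^ 2 + 2) * Real.tan θ ^ 2 - 2 * w * h * Real.tan θ
      + (h ^ 2 - 1) = 0 := by
  have h1 : HasDerivAt (fun θ : ℝ => w - Real.sin θ) (-Real.cos θ) θ :=
    (Real.hasDerivAt_sin θ).const_sub w
  have h2 : HasDerivAt (fun θ : ℝ => h - Real.cos θ) (Real.sin θ) θ := by
    simpa using (Real.hasDerivAt_cos θ).const_sub h
  have hm : deriv (fun θ : ℝ => (w - Real.sin θ) * (h - Real.cos θ)) θ = _ := (h1.mul h2).deriv
  rw [hm] at hcrit
  have hc : 0 < Real.cos θ := Real.cos_pos_of_mem_Ioo hθ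
  have hpy : Real.sin θ ^ 2 + Real.cos θ ^ 2 = 1 := Real.sin_sq_add_cos_sq θ
  rw [Real.tan_eq_sin_div_cos]
  field_simp
  have hE : w * Real.sin θ - h * Real.cos θ = Real.sin θ ^ 2 - Real.cos θ ^ 2 := by
    linear_combination hcrit
  linear_combination ((Real.sin θ ^ 2 + Real.cos θ ^ 2) *
      (w * Real.sin θ - h * Real.cos θ + Real.sin θ ^ 2 - Real.cos θ ^ 2)) * hE +
    ((Real.sin θ ^ 2 - Real.cos θ ^ 2) ^ 2) * hpy
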